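/- Let γ > 1, θ = (γ-1)/2, λ = (3-γ)/(2(γ-1)), and ψ(s) = ½ s|s|, with weak entropy η̌(ρ,m) = ρ∫ψ(m/ρ + ρ^θ s)[1−s²]_+^λ ds. There exists M = M(γ) such that |∂_m η̌(ρ,m)| ≤ M(|u| + ρ^θ) and |∂_ρ η̌(ρ,m)| ≤ M(|u|² + ρ^{2θ}) for all ρ > 0, u = m/ρ. -/

import Mathlib

open MeasureTheory intervalIntegral Real Set Metric Filter Topology


lemma psi_hasDerivAt (x : ℝ) : HasDerivAt (fun y : ℝ => 1 / 2 * y * |y|) |x| x := by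
  rcases eq_or_ne x 0 with rfl | hx
  · rw [hasDerivAt_iff_tendsto_slope]
    have h1 : ∀ᶠ y in 𝓝[≠] (0:ℝ), 1 / 2 * |y| = slope (fun y : ℝ => 1 / 2 * y * |y|) 0 y := by
      filter_upwards [self_mem_nhdsWithin] with y hy
      have hy' : y ≠ 0 := hy
      rw [slope_def_field]
      field_simp
      ring
    have h2 : Filter.Tendsto (fun y : ℝ => 1 / 2 * |y|) (𝓝[≠] 0) (𝓝 |(0:ℝ)|) := by
      have := ((continuous_const.mul continuous_abs : Continuous fun y : ℝ => 1/2 * |y|).tendsto 0).mono_left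
        (nhdsWithin_le_nhds (s := {(0:ℝ)}ᶜ))
      simpa [Pi.mul_def] using this
    exact h2.congr' h1
  · rcases hx.lt_or_gt with h | h
    · have h2 := ((hasDerivAt_id x).const_mul (1/2 : ℝ)).mul (hasDerivAt_abs_neg h)
      refine (h2 : HasDerivAt (fun y : ℝ => 1 / 2 * y * |y|) _ x).congr_deriv ?_
      simp only [id_eq, abs_of_neg h]; ring
    · have h2 := ((hasDerivAt_id x).const_mul (1/2 : ℝ)).mul (hasDerivAt_abs_pos h)
      refine (h2 : HasDerivAt (fun y : ℝ => 1 / 2 * y * |y|) _ x).congr_deriv ?_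
      simp only [id_eq, abs_of_pos h]; ring

lemma w_meas (l : ℝ) : Measurable fun s : ℝ => (1 - s ^ 2) ^ l :=
  (measurable_const.sub (measurable_id.pow_const 2)).pow measurable_const

lemma w_nonneg (l : ℝ) {s : ℝ} (hs : s ∈ Set.Ioc (-1:ℝ) 1) : 0 ≤ (1 - s ^ 2) ^ l := by
  apply Real.rpow_nonneg
  nlinarith [hs.1, hs.2]

lemma w_intable {l : ℝ} (hl : -1 < l) :
    IntervalIntegrable (fun s : ℝ => (1 - s ^ 2) ^ l) volume (-1) 1 := by
  have hg : IntervalIntegrable (fun s : ℝ => 1 + ((1 - s) ^ l + (1 + s) ^ l)) volume (-1) 1 := by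
    apply IntervalIntegrable.add intervalIntegrable_const
    apply IntervalIntegrable.add
    · have := (intervalIntegrable_rpow' (a := (0:ℝ)) (b := (2:ℝ)) hl).comp_sub_left 1
      norm_num at this
      exact this.symm
    · have := (intervalIntegrable_rpow' (a := (0:ℝ)) (b := (2:ℝ)) hl).comp_add_left 1
      norm_num at this
      exact this
  apply hg.mono_fun' ((w_meas l).aestronglyMeasurable)
  rw [Filter.EventuallyLE, ae_restrict_iff' measurableSet_uIoc]
  apply ae_of_all
  intro s hs
  rw [Set.uIoc_of_le (by norm_num : (-1:ℝ) ≤ 1)] at hs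
  have h1 : (0:ℝ) ≤ 1 - s := by linarith [hs.2]
  have h2 : (0:ℝ) ≤ 1 + s := by linarith [hs.1]
  have h0 : (0:ℝ) ≤ 1 - s ^ 2 := by nlinarith [hs.1, hs.2]
  have hfac : (1 - s ^ 2) ^ l = (1 - s) ^ l * (1 + s) ^ l := by
    rw [← Real.mul_rpow h1 h2]; ring_nf
  have hnn := w_nonneg l hs
  rw [Real.norm_eq_abs, abs_of_nonneg hnn]
  rcases le_or_gt 0 l with hl0 | hl0
  · have : (1 - s ^ 2) ^ l ≤ 1 := Real.rpow_le_one h0 (by nlinarith) hl0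
    have p1 : (0:ℝ) ≤ (1 - s) ^ l := Real.rpow_nonneg h1 l
    have p2 : (0:ℝ) ≤ (1 + s) ^ l := Real.rpow_nonneg h2 l
    linarith
  · rcases le_or_gt 0 s with hs0 | hs0
    · have : (1 + s) ^ l ≤ 1 :=
        Real.rpow_le_one_of_one_le_of_nonpos (by linarith) hl0.le
      have p1 : (0:ℝ) ≤ (1 - s) ^ l := Real.rpow_nonneg h1 l
      have p2 : (0:ℝ) ≤ (1 + s) ^ l := Real.rpow_nonneg h2 l
      have : (1 - s ^ 2) ^ l ≤ (1 - s) ^ l := by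
        rw [hfac]
        exact mul_le_of_le_one_right p1 this
      linarith
    · have : (1 - s) ^ l ≤ 1 :=
        Real.rpow_le_one_of_one_le_of_nonpos (by linarith) hl0.le
      have p1 : (0:ℝ) ≤ (1 - s) ^ l := Real.rpow_nonneg h1 l
      have p2 : (0:ℝ) ≤ (1 + s) ^ l := Real.rpow_nonneg h2 l
      have : (1 - s ^ 2) ^ l ≤ (1 + s) ^ l := by
        rw [hfac]
        exact mul_le_of_le_one_left p2 this
      linarith

lemma mul_w_int {l : ℝ} (hl : -1 < l) {h : ℝ → ℝ} (hh : Continuous h) :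
    IntervalIntegrable (fun s => h s * (1 - s ^ 2) ^ l) volume (-1) 1 := by
  obtain ⟨C, hC⟩ := (isCompact_Icc (a := (-1:ℝ)) (b := 1)).exists_bound_of_continuousOn
    hh.continuousOn
  apply ((w_intable hl).const_mul C).mono_fun'
    ((hh.measurable.mul (w_meas l)).aestronglyMeasurable)
  rw [Filter.EventuallyLE, ae_restrict_iff' measurableSet_uIoc]
  apply ae_of_all
  intro s hs
  rw [Set.uIoc_of_le (by norm_num : (-1:ℝ) ≤ 1)] at hs
  have hnn := w_nonneg l hs
  have hCs := hC s (Set.mem_Icc.2 ⟨hs.1.le, hs.2⟩)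
  rw [Real.norm_eq_abs, Pi.mul_apply, abs_mul, abs_of_nonneg hnn]
  exact mul_le_mul_of_nonneg_right (by simpa using hCs) hnn

lemma integral_bound {l c : ℝ} (hl : -1 < l) (hc : 0 ≤ c) {f : ℝ → ℝ}
    (hf : ∀ s ∈ Set.Ioc (-1:ℝ) 1, |f s| ≤ c * (1 - s ^ 2) ^ l) :
    |∫ s in (-1:ℝ)..1, f s| ≤ c * ∫ s in (-1:ℝ)..1, (1 - s ^ 2) ^ l := by
  have hK0 : 0 ≤ ∫ s in (-1:ℝ)..1, (1 - s ^ 2) ^ l :=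
    intervalIntegral.integral_nonneg (by norm_num) (fun s hs => by
      apply Real.rpow_nonneg; rcases hs with ⟨h1, h2⟩; nlinarith)
  have := intervalIntegral.norm_integral_le_abs_of_norm_le (μ := volume) (a := (-1:ℝ)) (b := 1)
    (f := f) (g := fun s => c * (1 - s ^ 2) ^ l) ?_ ((w_intable hl).const_mul c)
  · rw [intervalIntegral.integral_const_mul] at this
    rw [Real.norm_eq_abs] at this
    calc |∫ s in (-1:ℝ)..1, f s| ≤ |c * ∫ s in (-1:ℝ)..1, (1 - s ^ 2) ^ l| := this
    _ = c * ∫ s in (-1:ℝ)..1, (1 - s ^ 2) ^ l := abs_of_nonneg (mul_nonneg hc hK0)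
  · rw [ae_restrict_iff' measurableSet_uIoc]
    apply ae_of_all
    intro s hs
    rw [Set.uIoc_of_le (by norm_num : (-1:ℝ) ≤ 1)] at hs
    rw [Real.norm_eq_abs]
    exact hf s hs

/-- The weak entropy generated by `ψ(s) = ½ s|s|`. -/
noncomputable def etaCheck (γ ρ m : ℝ) : ℝ :=
  ρ * ∫ s in (-1 : ℝ)..1,
    (1 / 2 * (m / ρ + ρ ^ ((γ - 1) / 2) * s) * |m / ρ + ρ ^ ((γ - 1) / 2) * s|)
      * (1 - s ^ 2) ^ ((3 - γ) / (2 * (γ - 1)))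

lemma lam_gt (γ : ℝ) (hγ : 1 < γ) : -1 < (3 - γ) / (2 * (γ - 1)) := by
  rw [lt_div_iff₀ (by linarith)]
  nlinarith

lemma hasDerivAt_m (γ ρ m : ℝ) (hγ : 1 < γ) (hρ : 0 < ρ) :
    HasDerivAt (fun mm : ℝ => etaCheck γ ρ mm)
      (ρ * ∫ s in (-1:ℝ)..1,
        (|m / ρ + ρ ^ ((γ - 1) / 2) * s| * ρ⁻¹) * (1 - s ^ 2) ^ ((3 - γ) / (2 * (γ - 1)))) m := by
  set l : ℝ := (3 - γ) / (2 * (γ - 1)) with hldef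
  set a : ℝ := ρ ^ ((γ - 1) / 2) with hadef
  have hl : -1 < l := lam_gt γ hγ
  have ha : 0 < a := Real.rpow_pos_of_pos hρ _
  have key := (intervalIntegral.hasDerivAt_integral_of_dominated_loc_of_deriv_le
      (μ := volume) (a := (-1:ℝ)) (b := 1)
      (F := fun mm s => (1 / 2 * (mm / ρ + a * s) * |mm / ρ + a * s|) * (1 - s ^ 2) ^ l)
      (F' := fun mm s => (|mm / ρ + a * s| * ρ⁻¹) * (1 - s ^ 2) ^ l)
      (x₀ := m) (s := Metric.ball m 1)
      (bound := fun s => ((|m / ρ| + ρ⁻¹ + a) * ρ⁻¹) * (1 - s ^ 2) ^ l)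
      (Metric.ball_mem_nhds m one_pos) ?_ ?_ ?_ ?_ ?_ ?_).2
  · exact key.const_mul ρ
  · exact Filter.Eventually.of_forall fun x =>
      (((by fun_prop : Continuous fun s : ℝ => 1 / 2 * (x / ρ + a * s) * |x / ρ + a * s|).measurable.mul
        (w_meas l)).aestronglyMeasurable)
  · exact mul_w_int hl (by fun_prop)
  · exact ((by fun_prop : Continuous fun s : ℝ => |m / ρ + a * s| * ρ⁻¹).measurable.mul
      (w_meas l)).aestronglyMeasurable
  · apply ae_of_all
    intro s hs x hx
    rw [Set.uIoc_of_le (by norm_num : (-1:ℝ) ≤ 1)] at hs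
    have hw := w_nonneg l hs
    have hs1 : |s| ≤ 1 := abs_le.mpr ⟨hs.1.le, hs.2⟩
    have hxm : |x - m| < 1 := by rwa [Metric.mem_ball, Real.dist_eq] at hx
    have hq : |x / ρ + a * s| ≤ |m / ρ| + ρ⁻¹ + a := by
      have h1 : |x / ρ + a * s| ≤ |m / ρ| + |(x - m) / ρ| + |a * s| := by
        calc |x / ρ + a * s| = |m / ρ + (x - m) / ρ + a * s| := by ring_nf
        _ ≤ |m / ρ + (x - m) / ρ| + |a * s| := abs_add_le _ _
        _ ≤ |m / ρ| + |(x - m) / ρ| + |a * s| := by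
            exact add_le_add (abs_add_le _ _) le_rfl
      have h2 : |(x - m) / ρ| ≤ ρ⁻¹ := by
        rw [abs_div, abs_of_pos hρ, div_le_iff₀ hρ]
        calc |x - m| ≤ 1 := hxm.le
        _ = ρ⁻¹ * ρ := by field_simp
      have h3 : |a * s| ≤ a := by
        rw [abs_mul, abs_of_pos ha]
        nlinarith [abs_nonneg s]
      linarith
    have hnn : (0:ℝ) ≤ |x / ρ + a * s| * ρ⁻¹ := by positivity
    rw [Real.norm_eq_abs, abs_of_nonneg (mul_nonneg hnn hw)]
    have : |x / ρ + a * s| * ρ⁻¹ ≤ (|m / ρ| + ρ⁻¹ + a) * ρ⁻¹ := by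
      apply mul_le_mul_of_nonneg_right hq (by positivity)
    exact mul_le_mul_of_nonneg_right this hw
  · exact mul_w_int hl continuous_const
  · apply ae_of_all
    intro s _ x _
    have hg : HasDerivAt (fun x : ℝ => x / ρ + a * s) ρ⁻¹ x := by
      simpa [one_div] using ((hasDerivAt_id x).div_const ρ).add_const (a * s)
    have hpsi := (psi_hasDerivAt (x / ρ + a * s)).comp x hg
    simpa [Function.comp] using hpsi.mul_const ((1 - s ^ 2) ^ l)

lemma hasDerivAt_rho (γ ρ m : ℝ) (hγ : 1 < γ) (hρ : 0 < ρ) :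
    HasDerivAt (fun r : ℝ => etaCheck γ r m)
      ((∫ s in (-1:ℝ)..1,
          (1 / 2 * (m / ρ + ρ ^ ((γ - 1) / 2) * s) * |m / ρ + ρ ^ ((γ - 1) / 2) * s|)
            * (1 - s ^ 2) ^ ((3 - γ) / (2 * (γ - 1))))
        + ρ * ∫ s in (-1:ℝ)..1,
          (|m / ρ + ρ ^ ((γ - 1) / 2) * s|
              * (-(m / ρ ^ 2) + (γ - 1) / 2 * ρ ^ ((γ - 1) / 2 - 1) * s))
            * (1 - s ^ 2) ^ ((3 - γ) / (2 * (γ - 1)))) ρ := by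
  set l : ℝ := (3 - γ) / (2 * (γ - 1)) with hldef
  set θ : ℝ := (γ - 1) / 2 with hθdef
  have hl : -1 < l := lam_gt γ hγ
  have hθ : 0 < θ := by rw [hθdef]; linarith
  have key := (intervalIntegral.hasDerivAt_integral_of_dominated_loc_of_deriv_le
      (μ := volume) (a := (-1:ℝ)) (b := 1)
      (F := fun r s => (1 / 2 * (m / r + r ^ θ * s) * |m / r + r ^ θ * s|) * (1 - s ^ 2) ^ l)
      (F' := fun r s => (|m / r + r ^ θ * s| * (-(m / r ^ 2) + θ * r ^ (θ - 1) * s))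
          * (1 - s ^ 2) ^ l)
      (x₀ := ρ) (s := Metric.ball ρ (ρ / 2))
      (bound := fun s => ((2 * |m| / ρ + (2 * ρ) ^ θ)
          * (4 * |m| / ρ ^ 2 + θ * ((ρ / 2) ^ (θ - 1) + (2 * ρ) ^ (θ - 1))))
          * (1 - s ^ 2) ^ l)
      (Metric.ball_mem_nhds ρ (by positivity)) ?_ ?_ ?_ ?_ ?_ ?_).2
  · have h2 := (hasDerivAt_id ρ).mul key
    simp only [id_eq, one_mul] at h2
    exact h2
  · exact Filter.Eventually.of_forall fun x =>
      (((by fun_prop : Continuous fun s : ℝ =>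
          1 / 2 * (m / x + x ^ θ * s) * |m / x + x ^ θ * s|).measurable.mul
        (w_meas l)).aestronglyMeasurable)
  · exact mul_w_int hl (by fun_prop)
  · exact ((by fun_prop : Continuous fun s : ℝ =>
        |m / ρ + ρ ^ θ * s| * (-(m / ρ ^ 2) + θ * ρ ^ (θ - 1) * s)).measurable.mul
      (w_meas l)).aestronglyMeasurable
  · apply ae_of_all
    intro s hs x hx
    rw [Set.uIoc_of_le (by norm_num : (-1:ℝ) ≤ 1)] at hs
    have hw := w_nonneg l hs
    have hs1 : |s| ≤ 1 := abs_le.mpr ⟨hs.1.le, hs.2⟩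
    rw [Metric.mem_ball, Real.dist_eq] at hx
    have hx1 : ρ / 2 < x := by
      cases' abs_lt.mp hx with h1 h2; linarith
    have hx2 : x ≤ 2 * ρ := by
      cases' abs_lt.mp hx with h1 h2; linarith
    have hx0 : 0 < x := lt_trans (by positivity) hx1
    have hB1 : |m / x + x ^ θ * s| ≤ 2 * |m| / ρ + (2 * ρ) ^ θ := by
      have e1 : |m / x| ≤ 2 * |m| / ρ := by
        rw [abs_div, abs_of_pos hx0, div_le_div_iff₀ hx0 hρ]
        nlinarith [abs_nonneg m]
      have e2 : |x ^ θ * s| ≤ (2 * ρ) ^ θ := by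
        rw [abs_mul, abs_of_nonneg (Real.rpow_nonneg hx0.le θ)]
        calc x ^ θ * |s| ≤ x ^ θ * 1 := by
              exact mul_le_mul_of_nonneg_left hs1 (Real.rpow_nonneg hx0.le θ)
        _ = x ^ θ := mul_one _
        _ ≤ (2 * ρ) ^ θ := Real.rpow_le_rpow hx0.le hx2 hθ.le
      calc |m / x + x ^ θ * s| ≤ |m / x| + |x ^ θ * s| := abs_add_le _ _
      _ ≤ _ := add_le_add e1 e2
    have hB2 : |(-(m / x ^ 2) + θ * x ^ (θ - 1) * s)|
        ≤ 4 * |m| / ρ ^ 2 + θ * ((ρ / 2) ^ (θ - 1) + (2 * ρ) ^ (θ - 1)) := by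
      have e1 : |m / x ^ 2| ≤ 4 * |m| / ρ ^ 2 := by
        rw [abs_div, abs_of_pos (by positivity : (0:ℝ) < x ^ 2), div_le_div_iff₀ (by positivity) (by positivity)]
        have key : 0 ≤ (2 * x - ρ) * (2 * x + ρ) * |m| :=
          mul_nonneg (mul_nonneg (by linarith) (by linarith)) (abs_nonneg m)
        nlinarith [key]
      have e2 : x ^ (θ - 1) ≤ (ρ / 2) ^ (θ - 1) + (2 * ρ) ^ (θ - 1) := by
        rcases le_or_gt 0 (θ - 1) with h | h
        · have := Real.rpow_le_rpow hx0.le hx2 h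
          have h2 : (0:ℝ) ≤ (ρ / 2) ^ (θ - 1) := Real.rpow_nonneg (by positivity) _
          linarith
        · have := Real.rpow_le_rpow_of_nonpos (by positivity : (0:ℝ) < ρ / 2) hx1.le h.le
          have h2 : (0:ℝ) ≤ (2 * ρ) ^ (θ - 1) := Real.rpow_nonneg (by positivity) _
          linarith
      have e3 : |θ * x ^ (θ - 1) * s| ≤ θ * ((ρ / 2) ^ (θ - 1) + (2 * ρ) ^ (θ - 1)) := by
        rw [abs_mul, abs_mul, abs_of_pos hθ,
          abs_of_nonneg (Real.rpow_nonneg hx0.le _)]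
        have hx3 : (0:ℝ) ≤ x ^ (θ - 1) := Real.rpow_nonneg hx0.le _
        calc θ * x ^ (θ - 1) * |s| ≤ θ * x ^ (θ - 1) * 1 := by
              exact mul_le_mul_of_nonneg_left hs1 (by positivity)
        _ = θ * x ^ (θ - 1) := mul_one _
        _ ≤ _ := mul_le_mul_of_nonneg_left e2 hθ.le
      calc |(-(m / x ^ 2) + θ * x ^ (θ - 1) * s)| ≤ |m / x ^ 2| + |θ * x ^ (θ - 1) * s| := by
            rw [← abs_neg (m / x ^ 2)] at *; exact abs_add_le _ _
      _ ≤ _ := add_le_add e1 e3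
    rw [Real.norm_eq_abs, abs_mul, abs_of_nonneg hw, abs_mul, abs_abs]
    apply mul_le_mul_of_nonneg_right _ hw
    have hnn1 : (0:ℝ) ≤ 2 * |m| / ρ + (2 * ρ) ^ θ := by
      have := Real.rpow_nonneg (by positivity : (0:ℝ) ≤ 2 * ρ) θ
      positivity
    exact mul_le_mul hB1 hB2 (abs_nonneg _) hnn1
  · exact mul_w_int hl continuous_const
  · apply ae_of_all
    intro s _ x hx
    rw [Metric.mem_ball, Real.dist_eq] at hx
    have hx0 : 0 < x := by
      cases' abs_lt.mp hx with h1 h2; linarith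
    have hg1 : HasDerivAt (fun r : ℝ => m / r) (-(m / x ^ 2)) x := by
      have h := (hasDerivAt_inv hx0.ne').const_mul m
      have h2 : -(m / x ^ 2) = m * (-(x ^ 2)⁻¹) := by field_simp
      rw [h2]
      simpa [div_eq_mul_inv] using h
    have hg2 : HasDerivAt (fun r : ℝ => r ^ θ * s) (θ * x ^ (θ - 1) * s) x :=
      (Real.hasDerivAt_rpow_const (Or.inl hx0.ne')).mul_const s
    have hg := hg1.add hg2
    have hpsi := (psi_hasDerivAt (m / x + x ^ θ * s)).comp x hg
    simpa [Function.comp] using hpsi.mul_const ((1 - s ^ 2) ^ l)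

set_option maxHeartbeats 1000000 in
/-- Derivative bounds `|∂_m η̌| ≤ M(|u| + ρ^θ)`, `|∂_ρ η̌| ≤ M(|u|² + ρ^{2θ})`. -/
theorem stmt10 (γ : ℝ) (hγ : 1 < γ) :
    ∃ M > 0, ∀ ρ m : ℝ, 0 < ρ →
      |deriv (fun mm : ℝ => etaCheck γ ρ mm) m| ≤ M * (|m / ρ| + ρ ^ ((γ - 1) / 2))
      ∧ |deriv (fun r : ℝ => etaCheck γ r m) ρ|
          ≤ M * ((m / ρ) ^ 2 + ρ ^ (2 * ((γ - 1) / 2))) := by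
  have hθ : 0 < (γ - 1) / 2 := by linarith
  have hl := lam_gt γ hγ
  set T : ℝ := (γ - 1) / 2 with hT
  set K : ℝ := ∫ s in (-1:ℝ)..1, (1 - s ^ 2) ^ ((3 - γ) / (2 * (γ - 1))) with hKdef
  have hK0 : 0 ≤ K :=
    intervalIntegral.integral_nonneg (by norm_num)
      (fun s hs => Real.rpow_nonneg (by nlinarith [hs.1, hs.2]) _)
  refine ⟨(4 + 2 * T) * K + K + 1, by nlinarith, fun ρ m hρ => ?_⟩
  set a : ℝ := ρ ^ T with hadef
  have ha : 0 < a := Real.rpow_pos_of_pos hρ _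
  set U : ℝ := |m / ρ| with hU
  have hU0 : 0 ≤ U := abs_nonneg _
  constructor
  · rw [(hasDerivAt_m γ ρ m hγ hρ).deriv, ← hT, ← hadef, abs_mul, abs_of_pos hρ]
    have hb := integral_bound hl (c := (U + a) * ρ⁻¹)
      (by positivity)
      (f := fun s => (|m / ρ + a * s| * ρ⁻¹) * (1 - s ^ 2) ^ ((3 - γ) / (2 * (γ - 1)))) ?_
    · have h1 : ρ * |∫ s in (-1:ℝ)..1,
          (|m / ρ + a * s| * ρ⁻¹) * (1 - s ^ 2) ^ ((3 - γ) / (2 * (γ - 1)))|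
          ≤ ρ * ((U + a) * ρ⁻¹ * K) := by
        exact mul_le_mul_of_nonneg_left hb hρ.le
      have h2 : ρ * ((U + a) * ρ⁻¹ * K) = (U + a) * K := by
        field_simp
      have h3 : (U + a) * K ≤ ((4 + 2 * T) * K + K + 1) * (U + a) := by
        nlinarith [mul_nonneg (mul_nonneg hθ.le hK0) (by linarith : (0:ℝ) ≤ U + a),
          mul_nonneg hK0 (by linarith : (0:ℝ) ≤ U + a)]
      calc ρ * |∫ s in (-1:ℝ)..1,
          (|m / ρ + a * s| * ρ⁻¹) * (1 - s ^ 2) ^ ((3 - γ) / (2 * (γ - 1)))|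
          ≤ ρ * ((U + a) * ρ⁻¹ * K) := h1
        _ = (U + a) * K := h2
        _ ≤ ((4 + 2 * T) * K + K + 1) * (U + a) := h3
    · intro s hs
      have hw := w_nonneg ((3 - γ) / (2 * (γ - 1))) hs
      have hs1 : |s| ≤ 1 := abs_le.mpr ⟨hs.1.le, hs.2⟩
      rw [abs_mul, abs_of_nonneg hw, abs_mul, abs_abs, abs_of_pos (by positivity : (0:ℝ) < ρ⁻¹)]
      apply mul_le_mul_of_nonneg_right _ hw
      apply mul_le_mul_of_nonneg_right _ (by positivity)
      calc |m / ρ + a * s| ≤ |m / ρ| + |a * s| := abs_add_le _ _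
        _ ≤ U + a := by
            rw [abs_mul, abs_of_pos ha]
            nlinarith [abs_nonneg s]
  · rw [(hasDerivAt_rho γ ρ m hγ hρ).deriv, ← hT, ← hadef]
    have hpt1 : ∀ s ∈ Set.Ioc (-1:ℝ) 1,
        |(1 / 2 * (m / ρ + a * s) * |m / ρ + a * s|)
            * (1 - s ^ 2) ^ ((3 - γ) / (2 * (γ - 1)))|
          ≤ 1 / 2 * (U + a) ^ 2 * (1 - s ^ 2) ^ ((3 - γ) / (2 * (γ - 1))) := by
      intro s hs
      have hw := w_nonneg ((3 - γ) / (2 * (γ - 1))) hs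
      have hs1 : |s| ≤ 1 := abs_le.mpr ⟨hs.1.le, hs.2⟩
      rw [abs_mul, abs_of_nonneg hw]
      apply mul_le_mul_of_nonneg_right _ hw
      have hq : |m / ρ + a * s| ≤ U + a := by
        calc |m / ρ + a * s| ≤ |m / ρ| + |a * s| := abs_add_le _ _
          _ ≤ U + a := by
              rw [abs_mul, abs_of_pos ha]
              nlinarith [abs_nonneg s]
      rw [abs_mul, abs_mul, abs_abs, show |(1:ℝ)/2| = 1/2 by norm_num]
      calc 1 / 2 * |m / ρ + a * s| * |m / ρ + a * s| ≤ 1 / 2 * (U + a) * (U + a) := by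
            apply mul_le_mul (mul_le_mul_of_nonneg_left hq (by norm_num)) hq (abs_nonneg _)
            positivity
        _ = 1 / 2 * (U + a) ^ 2 := by ring
    have hpt2 : ∀ s ∈ Set.Ioc (-1:ℝ) 1,
        |(|m / ρ + a * s| * (-(m / ρ ^ 2) + T * ρ ^ (T - 1) * s))
            * (1 - s ^ 2) ^ ((3 - γ) / (2 * (γ - 1)))|
          ≤ (U + a) * ((U + T * a) * ρ⁻¹) * (1 - s ^ 2) ^ ((3 - γ) / (2 * (γ - 1))) := by
      intro s hs
      have hw := w_nonneg ((3 - γ) / (2 * (γ - 1))) hs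
      have hs1 : |s| ≤ 1 := abs_le.mpr ⟨hs.1.le, hs.2⟩
      rw [abs_mul, abs_of_nonneg hw, abs_mul, abs_abs]
      apply mul_le_mul_of_nonneg_right _ hw
      have hq : |m / ρ + a * s| ≤ U + a := by
        calc |m / ρ + a * s| ≤ |m / ρ| + |a * s| := abs_add_le _ _
          _ ≤ U + a := by
              rw [abs_mul, abs_of_pos ha]
              nlinarith [abs_nonneg s]
      have e1 : |m / ρ ^ 2| = U * ρ⁻¹ := by
        rw [show m / ρ ^ 2 = m / ρ * ρ⁻¹ by ring, abs_mul,
          abs_of_pos (by positivity : (0:ℝ) < ρ⁻¹)]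
      have e2 : ρ ^ (T - 1) = a * ρ⁻¹ := by
        rw [Real.rpow_sub_one hρ.ne', div_eq_mul_inv]
      have e3 : |T * ρ ^ (T - 1) * s| ≤ T * a * ρ⁻¹ := by
        rw [e2, abs_mul, abs_mul, abs_of_pos hθ,
          abs_of_nonneg (by positivity : (0:ℝ) ≤ a * ρ⁻¹)]
        have h5 : T * (a * ρ⁻¹) * |s| ≤ T * (a * ρ⁻¹) * 1 :=
          mul_le_mul_of_nonneg_left hs1 (by positivity)
        nlinarith [h5]
      have e4 : |(-(m / ρ ^ 2) + T * ρ ^ (T - 1) * s)|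
          ≤ |m / ρ ^ 2| + |T * ρ ^ (T - 1) * s| := by
        calc |(-(m / ρ ^ 2) + T * ρ ^ (T - 1) * s)|
            ≤ |(-(m / ρ ^ 2))| + |T * ρ ^ (T - 1) * s| := abs_add_le _ _
          _ = |m / ρ ^ 2| + |T * ρ ^ (T - 1) * s| := by rw [abs_neg]
      have hg : |(-(m / ρ ^ 2) + T * ρ ^ (T - 1) * s)| ≤ (U + T * a) * ρ⁻¹ := by
        rw [e1] at e4
        have e5 : (U + T * a) * ρ⁻¹ = U * ρ⁻¹ + T * a * ρ⁻¹ := by ring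
        rw [e5]
        linarith
      exact mul_le_mul hq hg (abs_nonneg _) (by positivity)
    have hbI := integral_bound hl (c := 1 / 2 * (U + a) ^ 2) (by positivity) hpt1
    have hbJ := integral_bound hl (c := (U + a) * ((U + T * a) * ρ⁻¹)) (by positivity) hpt2
    have habs : |(∫ s in (-1:ℝ)..1,
        (1 / 2 * (m / ρ + a * s) * |m / ρ + a * s|)
          * (1 - s ^ 2) ^ ((3 - γ) / (2 * (γ - 1))))
        + ρ * ∫ s in (-1:ℝ)..1,
          (|m / ρ + a * s| * (-(m / ρ ^ 2) + T * ρ ^ (T - 1) * s))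
            * (1 - s ^ 2) ^ ((3 - γ) / (2 * (γ - 1)))|
        ≤ 1 / 2 * (U + a) ^ 2 * K + ρ * ((U + a) * ((U + T * a) * ρ⁻¹) * K) := by
      calc _ ≤ |∫ s in (-1:ℝ)..1,
          (1 / 2 * (m / ρ + a * s) * |m / ρ + a * s|)
            * (1 - s ^ 2) ^ ((3 - γ) / (2 * (γ - 1)))|
          + |ρ * ∫ s in (-1:ℝ)..1,
            (|m / ρ + a * s| * (-(m / ρ ^ 2) + T * ρ ^ (T - 1) * s))
              * (1 - s ^ 2) ^ ((3 - γ) / (2 * (γ - 1)))| := abs_add_le _ _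
        _ ≤ 1 / 2 * (U + a) ^ 2 * K + ρ * ((U + a) * ((U + T * a) * ρ⁻¹) * K) := by
            rw [abs_mul, abs_of_pos hρ]
            exact add_le_add hbI (mul_le_mul_of_nonneg_left hbJ hρ.le)
    have hsimp : 1 / 2 * (U + a) ^ 2 * K + ρ * ((U + a) * ((U + T * a) * ρ⁻¹) * K)
        = 1 / 2 * (U + a) ^ 2 * K + (U + a) * (U + T * a) * K := by
      field_simp
    have hA2 : ρ ^ (2 * T) = a * a := by
      rw [show 2 * T = T + T by ring, Real.rpow_add hρ]
    have hU2 : (m / ρ) ^ 2 = U ^ 2 := (sq_abs _).symm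
    rw [hU2, hA2]
    clear_value T K a U
    have hfin : 1 / 2 * (U + a) ^ 2 * K + (U + a) * (U + T * a) * K
        ≤ ((4 + 2 * T) * K + K + 1) * (U ^ 2 + a * a) := by
      nlinarith [mul_nonneg hK0 (sq_nonneg (U - a)),
        mul_nonneg (mul_nonneg hθ.le hK0) (sq_nonneg (U - a)),
        mul_nonneg hK0 (mul_nonneg hU0 ha.le),
        mul_nonneg (mul_nonneg hθ.le hK0) (mul_nonneg hU0 ha.le),
        sq_nonneg U, sq_nonneg a, mul_nonneg hU0 ha.le,
        mul_nonneg hK0 (sq_nonneg U), mul_nonneg hK0 (sq_nonneg a),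
        mul_nonneg (mul_nonneg hθ.le hK0) (sq_nonneg U),
        mul_nonneg (mul_nonneg hθ.le hK0) (sq_nonneg a)]
    exact (habs.trans (le_of_eq hsimp)).trans hfin
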